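/- Let ρ, σ be invertible density operators and M := ρ^{-1/2}√(ρ^{1/2} σ ρ^{1/2})ρ^{-1/2}. If there exists c ∈ (0,1) such that the spectrum of M equals {c, 1/c} and M commutes with ρ − σ, then T(ρ,σ) = √(1 − F(ρ,σ)²). -/

import Mathlib

open Matrix
open scoped ComplexOrder

/-- `Matrix.PosSemidef.sqrt` (removed from Mathlib), with its former definition. -/
noncomputable def Matrix.PosSemidef.sqrt {n 𝕜 : Type*} [Fintype n] [DecidableEq n] [RCLike 𝕜]
    {A : Matrix n n 𝕜} (hA : A.PosSemidef) : Matrix n n 𝕜 :=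
  hA.1.eigenvectorUnitary.1 * diagonal ((↑) ∘ (Real.sqrt ∘ hA.1.eigenvalues)) *
  (star hA.1.eigenvectorUnitary : Matrix n n 𝕜)

/-- The trace norm of a (square complex) matrix: `‖A‖₁ = tr √(Aᴴ A)`. -/
noncomputable def traceNorm {n : ℕ} (A : Matrix (Fin n) (Fin n) ℂ) : ℝ :=
  ((Matrix.posSemidef_conjTranspose_mul_self A).sqrt).trace.re

open scoped MatrixOrder in
lemma Matrix.PosSemidef.sqrt_eq_cfcSqrt {n : ℕ} {A : Matrix (Fin n) (Fin n) ℂ}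
    (hA : A.PosSemidef) : hA.sqrt = CFC.sqrt A := by
  rw [CFC.sqrt_eq_cfc, cfc_nnreal_eq_real _ A hA.nonneg, hA.1.cfc_eq]
  simp only [IsHermitian.cfc, Matrix.PosSemidef.sqrt, Unitary.conjStarAlgAut_apply]
  congr 3
  ext i
  simp [Real.coe_sqrt]
  rw [max_eq_left (hA.eigenvalues_nonneg i)]

open scoped MatrixOrder in
lemma Matrix.PosSemidef.posSemidef_sqrt {n : ℕ} {A : Matrix (Fin n) (Fin n) ℂ}
    (hA : A.PosSemidef) : hA.sqrt.PosSemidef := by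
  rw [hA.sqrt_eq_cfcSqrt]; exact (CFC.sqrt_nonneg A).posSemidef

open scoped MatrixOrder in
lemma Matrix.PosSemidef.sqrt_mul_self {n : ℕ} {A : Matrix (Fin n) (Fin n) ℂ}
    (hA : A.PosSemidef) : hA.sqrt * hA.sqrt = A := by
  rw [hA.sqrt_eq_cfcSqrt]; exact CFC.sqrt_mul_sqrt_self A hA.nonneg

open scoped MatrixOrder in
lemma Matrix.PosSemidef.eq_sqrt_of_sq_eq {n : ℕ} {B : Matrix (Fin n) (Fin n) ℂ}
    (hB : B.PosSemidef) {A : Matrix (Fin n) (Fin n) ℂ} {hA : A.PosSemidef} (h : B ^ 2 = A) :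
    B = hA.sqrt := by
  rw [hA.sqrt_eq_cfcSqrt, ← h, CFC.sqrt_sq B hB.nonneg]

open scoped MatrixOrder in
lemma Matrix.PosSemidef.eq_of_sq_eq_sq {n : ℕ} {A B : Matrix (Fin n) (Fin n) ℂ}
    (hA : A.PosSemidef) (hB : B.PosSemidef) (h : A ^ 2 = B ^ 2) : A = B := by
  rw [← CFC.sqrt_sq A hA.nonneg, h, CFC.sqrt_sq B hB.nonneg]

namespace FvdGAux

variable {n : ℕ}

lemma psd_smul_ofReal {A : Matrix (Fin n) (Fin n) ℂ} (hA : A.PosSemidef) {r : ℝ} (hr : 0 ≤ r) :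
    ((r : ℂ) • A).PosSemidef := by
  constructor
  · simp [Matrix.IsHermitian, Matrix.conjTranspose_smul, hA.1.eq, Complex.star_def,
      Complex.conj_ofReal]
  · intro x
    have h1 := hA.2 x
    exact (hA.smul (a := (r : ℂ)) (by exact_mod_cast hr)).2 x

lemma cancel_conj {R X Y : Matrix (Fin n) (Fin n) ℂ} (hR : R⁻¹ * R = 1) (hR' : R * R⁻¹ = 1)
    (h : R * X * R = R * Y * R) : X = Y := by
  have key : ∀ Z : Matrix (Fin n) (Fin n) ℂ, R⁻¹ * (R * Z * R) * R⁻¹ = Z := by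
    intro Z
    rw [show R * Z * R = R * (Z * R) from by rw [mul_assoc], ← mul_assoc, hR, one_mul,
      mul_assoc, hR', mul_one]
  rw [← key X, h, key Y]

lemma quad_of_spec {M : Matrix (Fin n) (Fin n) ℂ} (hMh : M.IsHermitian)
    {c : ℝ} (hc0 : c ≠ 0) (hspec : spectrum ℂ M = {(c : ℂ), ((c : ℂ))⁻¹}) :
    M * M = ((c : ℂ) + ((c : ℂ))⁻¹) • M - 1 := by
  have hcC : (c : ℂ) ≠ 0 := by exact_mod_cast hc0
  set U : Matrix (Fin n) (Fin n) ℂ := (hMh.eigenvectorUnitary : Matrix (Fin n) (Fin n) ℂ) with hU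
  have hUU : U * star U = 1 := Matrix.mem_unitaryGroup_iff.mp hMh.eigenvectorUnitary.2
  have hU'U : star U * U = 1 := Matrix.mem_unitaryGroup_iff'.mp hMh.eigenvectorUnitary.2
  set f : Fin n → ℂ := RCLike.ofReal ∘ hMh.eigenvalues with hfdef
  have hst : M = U * diagonal f * star U := hMh.spectral_theorem
  have hf : ∀ i, f i = (c : ℂ) ∨ f i = ((c : ℂ))⁻¹ := by
    intro i
    have h1 : ((hMh.eigenvalues i : ℝ) : ℂ) ∈ spectrum ℂ M :=
      spectrum.algebraMap_mem ℂ (hMh.eigenvalues_mem_spectrum_real i)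
    rw [hspec] at h1
    simpa [hfdef] using h1
  have hdiag : diagonal f * diagonal f = ((c : ℂ) + ((c : ℂ))⁻¹) • diagonal f - 1 := by
    rw [diagonal_mul_diagonal]
    ext i j
    rcases eq_or_ne i j with rfl | hij
    · simp only [diagonal_apply_eq, Matrix.sub_apply, Matrix.smul_apply, diagonal_apply_eq,
        Matrix.one_apply_eq, smul_eq_mul]
      rcases hf i with h | h <;> rw [h] <;> field_simp <;> ring_nf
    · simp [diagonal_apply_ne _ hij, Matrix.one_apply_ne hij]
  calc M * M = (U * diagonal f * star U) * (U * diagonal f * star U) := by rw [← hst]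
    _ = U * (diagonal f * diagonal f) * star U := by
        simp only [mul_assoc]
        rw [← mul_assoc (star U) U (diagonal f * star U), hU'U, one_mul]
    _ = ((c : ℂ) + ((c : ℂ))⁻¹) • (U * diagonal f * star U) - U * star U := by
        rw [hdiag]
        simp only [mul_sub, sub_mul, Matrix.mul_smul, Matrix.smul_mul, mul_one]
    _ = ((c : ℂ) + ((c : ℂ))⁻¹) • M - 1 := by rw [← hst, hUU]

end FvdGAux

set_option maxHeartbeats 1000000 in
/-- For invertible density operators `ρ, σ` with geometric mean
`M = ρ^{-1/2} N ρ^{-1/2}` (where `N` is the positive square root of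
`ρ^{1/2} σ ρ^{1/2}`): if `spec(M) = {c, 1/c}` for some `c ∈ (0,1)` and `M` commutes
with `ρ - σ`, then the upper Fuchs–van de Graaf inequality is saturated. -/
theorem fvdg_upper_saturation_sufficient {n : ℕ}
    (ρ σ N : Matrix (Fin n) (Fin n) ℂ)
    (hρ : ρ.PosDef) (hσ : σ.PosDef)
    (hρtr : ρ.trace = 1) (hσtr : σ.trace = 1)
    (hN : N.PosSemidef)
    (hN2 : N * N = hρ.posSemidef.sqrt * σ * hρ.posSemidef.sqrt)
    (M : Matrix (Fin n) (Fin n) ℂ)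
    (hM : M = (hρ.posSemidef.sqrt)⁻¹ * N * (hρ.posSemidef.sqrt)⁻¹)
    (c : ℝ) (hc : c ∈ Set.Ioo (0 : ℝ) 1)
    (hspec : spectrum ℂ M = {(c : ℂ), ((c : ℂ))⁻¹})
    (hcomm : M * (ρ - σ) = (ρ - σ) * M) :
    (1 / 2) * traceNorm (ρ - σ) =
      Real.sqrt (1 - (traceNorm (hρ.posSemidef.sqrt * hσ.posSemidef.sqrt)) ^ 2) := by
  obtain ⟨hc0, hc1⟩ := hc
  have hcC0 : (c : ℂ) ≠ 0 := by exact_mod_cast hc0.ne'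
  have hc2R : c ^ 2 ≠ 1 := by nlinarith
  have hc2 : ((c : ℂ)) ^ 2 ≠ 1 := by exact_mod_cast hc2R
  have h1c2 : ((1 : ℂ) + (c : ℂ) ^ 2) ≠ 0 := by
    have : (0 : ℝ) < 1 + c ^ 2 := by positivity
    exact_mod_cast this.ne'
  -- square root of ρ
  set R : Matrix (Fin n) (Fin n) ℂ := hρ.posSemidef.sqrt with hRdef
  have hRpsd : R.PosSemidef := hρ.posSemidef.posSemidef_sqrt
  have hRR : R * R = ρ := hρ.posSemidef.sqrt_mul_self
  have hdetR : R.det ≠ 0 := by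
    have h1 : R.det * R.det = ρ.det := by rw [← det_mul, hRR]
    intro h
    rw [h, mul_zero] at h1
    exact hρ.det_pos.ne' h1.symm
  have hRi : R⁻¹ * R = 1 := nonsing_inv_mul R (Ne.isUnit hdetR)
  have hRi' : R * R⁻¹ = 1 := mul_nonsing_inv R (Ne.isUnit hdetR)
  -- N = R M R, σ = M ρ M
  have hNR : N = R * M * R := by
    rw [hM]
    calc N = (R * R⁻¹) * N * (R⁻¹ * R) := by rw [hRi, hRi', one_mul, mul_one]
      _ = R * (R⁻¹ * N * R⁻¹) * R := by simp only [mul_assoc]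
  have hσM : M * ρ * M = σ := by
    apply FvdGAux.cancel_conj hRi hRi'
    have h1 : (R * M * R) * (R * M * R) = R * (M * ρ * M) * R := by
      simp only [mul_assoc]
      rw [← mul_assoc R R (M * R), hRR]
    rw [← h1, ← hNR, hN2]
  -- M is Hermitian, and satisfies the quadratic equation
  have hMh : M.IsHermitian := by
    rw [hM]
    have hRih : (R⁻¹).IsHermitian := hRpsd.1.inv
    show _ = _
    simp only [conjTranspose_mul, hRih.eq, hN.1.eq, mul_assoc]
  have hquad := FvdGAux.quad_of_spec hMh hc0.ne' hspec
  -- spectral projections (unnormalized) as polynomials in M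
  set kR : ℝ := c⁻¹ - c with hkRdef
  have hkR0 : 0 < kR := by
    rw [hkRdef, sub_pos]
    exact lt_trans hc1 ((one_lt_inv₀ hc0).mpr hc1)
  set k : ℂ := ((kR : ℝ) : ℂ) with hkdef
  have hk0 : k ≠ 0 := by
    rw [hkdef]
    exact_mod_cast hkR0.ne'
  have hkc : k = ((c : ℂ))⁻¹ - (c : ℂ) := by rw [hkdef, hkRdef]; push_cast; ring
  set P : Matrix (Fin n) (Fin n) ℂ := ((c : ℂ))⁻¹ • (1 : Matrix (Fin n) (Fin n) ℂ) - M
    with hPdef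
  set Q : Matrix (Fin n) (Fin n) ℂ := M - (c : ℂ) • (1 : Matrix (Fin n) (Fin n) ℂ)
    with hQdef
  have hPQ : P * Q = 0 := by
    rw [hPdef, hQdef]
    simp only [smul_mul_assoc, mul_smul_comm, sub_mul, mul_sub, one_mul, mul_one, smul_sub,
      smul_smul, hquad]
    match_scalars <;> field_simp <;> ring
  have hQP : Q * P = 0 := by
    rw [hPdef, hQdef]
    simp only [smul_mul_assoc, mul_smul_comm, sub_mul, mul_sub, one_mul, mul_one, smul_sub,
      smul_smul, hquad]
    match_scalars <;> field_simp <;> ring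
  have hPh : Pᴴ = P := by
    simp [hPdef, conjTranspose_smul, conjTranspose_sub, conjTranspose_one, hMh.eq,
      Complex.star_def, map_inv₀, Complex.conj_ofReal]
  have hQh : Qᴴ = Q := by
    simp [hQdef, conjTranspose_smul, conjTranspose_sub, conjTranspose_one, hMh.eq,
      Complex.star_def, map_inv₀, Complex.conj_ofReal]
  have hXY : (P * ρ * P) * (Q * ρ * Q) = 0 := by
    simp only [mul_assoc]
    rw [← mul_assoc P Q (ρ * Q), hPQ, zero_mul, mul_zero, mul_zero]
  have hYX : (Q * ρ * Q) * (P * ρ * P) = 0 := by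
    simp only [mul_assoc]
    rw [← mul_assoc Q P (ρ * P), hQP, zero_mul, mul_zero, mul_zero]
  -- decomposition of ρ - σ
  have hDk : k • (ρ - σ) = (c : ℂ) • (P * ρ * P) - ((c : ℂ))⁻¹ • (Q * ρ * Q) := by
    rw [← hσM, hPdef, hQdef, hkc]
    simp only [smul_mul_assoc, mul_smul_comm, sub_mul, mul_sub, one_mul, mul_one, smul_sub,
      smul_smul, sub_smul, mul_assoc]
    match_scalars <;> field_simp <;> ring
  have h1mR : (0 : ℝ) < 1 - c ^ 2 := by nlinarith
  have h1m : (1 : ℂ) - (c : ℂ) ^ 2 ≠ 0 := sub_ne_zero.mpr (Ne.symm hc2)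
  set E : Matrix (Fin n) (Fin n) ℂ :=
      ((c ^ 2 / (1 - c ^ 2) : ℝ) : ℂ) • (P * ρ * P) + (((1 - c ^ 2)⁻¹ : ℝ) : ℂ) • (Q * ρ * Q)
      with hEdef
  have hkE : k • E = (c : ℂ) • (P * ρ * P) + ((c : ℂ))⁻¹ • (Q * ρ * Q) := by
    rw [hEdef, smul_add, smul_smul, smul_smul, hkc]
    have e1 : (((c : ℂ))⁻¹ - (c : ℂ)) * ((c ^ 2 / (1 - c ^ 2) : ℝ) : ℂ) = (c : ℂ) := by
      push_cast
      field_simp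
    have e2 : (((c : ℂ))⁻¹ - (c : ℂ)) * (((1 - c ^ 2)⁻¹ : ℝ) : ℂ) = ((c : ℂ))⁻¹ := by
      push_cast
      field_simp
    rw [e1, e2]
  have hE2 : E * E = (ρ - σ) * (ρ - σ) := by
    have h1 : (k • E) * (k • E) = (k • (ρ - σ)) * (k • (ρ - σ)) := by
      rw [hkE, hDk]
      simp only [add_mul, mul_add, sub_mul, mul_sub, smul_mul_assoc, mul_smul_comm, smul_smul,
        hXY, hYX, smul_zero]
      match_scalars <;> ring
    simp only [smul_mul_assoc, mul_smul_comm, smul_smul] at h1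
    exact smul_right_injective _ (mul_ne_zero hk0 hk0) h1
  have hEpsd : E.PosSemidef := by
    have hX : (P * ρ * P).PosSemidef := by
      have := hρ.posSemidef.mul_mul_conjTranspose_same P
      rwa [hPh] at this
    have hY : (Q * ρ * Q).PosSemidef := by
      have := hρ.posSemidef.mul_mul_conjTranspose_same Q
      rwa [hQh] at this
    exact (FvdGAux.psd_smul_ofReal hX (by positivity)).add
      (FvdGAux.psd_smul_ofReal hY (by positivity))
  have hEsqrt : E = (Matrix.posSemidef_conjTranspose_mul_self (ρ - σ)).sqrt := by
    apply Matrix.PosSemidef.eq_sqrt_of_sq_eq hEpsd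
    rw [pow_two, hE2]
    congr 1
    rw [conjTranspose_sub, hρ.1.eq, hσ.1.eq]
  -- traces
  have htσa : (M * (ρ * M)).trace = 1 := by rw [← mul_assoc, hσM, hσtr]
  have htρM : (ρ * M).trace = (M * ρ).trace := trace_mul_comm ρ M
  have htMM : ((c : ℂ) + ((c : ℂ))⁻¹) * (M * ρ).trace - 1 = 1 := by
    have h1 : (M * M * ρ).trace = 1 := by rw [← trace_mul_cycle M ρ M, hσM, hσtr]
    rw [hquad, sub_mul, smul_mul_assoc, one_mul, trace_sub, trace_smul, hρtr, smul_eq_mul] at h1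
    exact h1
  have ht : (M * ρ).trace = 2 * (c : ℂ) / (1 + (c : ℂ) ^ 2) := by
    rw [eq_div_iff h1c2]
    field_simp at htMM
    linear_combination htMM
  have htE : E.trace = ((2 * (1 - c ^ 2) / (1 + c ^ 2) : ℝ) : ℂ) := by
    rw [hEdef, hPdef, hQdef]
    simp only [trace_add, trace_smul, sub_mul, mul_sub, smul_mul_assoc, mul_smul_comm, one_mul,
      mul_one, smul_smul, trace_sub, mul_assoc, smul_eq_mul]
    rw [htρM, htσa, hρtr, ht]
    push_cast
    field_simp
    ring
  have hTN : traceNorm (ρ - σ) = 2 * (1 - c ^ 2) / (1 + c ^ 2) := by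
    rw [traceNorm, ← hEsqrt, htE, Complex.ofReal_re]
  -- the fidelity part
  set S : Matrix (Fin n) (Fin n) ℂ := hσ.posSemidef.sqrt with hSdef
  have hSpsd : S.PosSemidef := hσ.posSemidef.posSemidef_sqrt
  have hSS : S * S = σ := hσ.posSemidef.sqrt_mul_self
  have hdetS : S.det ≠ 0 := by
    have h1 : S.det * S.det = σ.det := by rw [← det_mul, hSS]
    intro h
    rw [h, mul_zero] at h1
    exact hσ.det_pos.ne' h1.symm
  have hAH : (R * S)ᴴ = S * R := by rw [conjTranspose_mul, hRpsd.1.eq, hSpsd.1.eq]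
  set W : Matrix (Fin n) (Fin n) ℂ := (Matrix.posSemidef_conjTranspose_mul_self (R * S)).sqrt
    with hWdef
  have hWpsd : W.PosSemidef := (Matrix.posSemidef_conjTranspose_mul_self (R * S)).posSemidef_sqrt
  have hWW : W * W = (R * S)ᴴ * (R * S) :=
    (Matrix.posSemidef_conjTranspose_mul_self (R * S)).sqrt_mul_self
  have hAAt : (R * S) * (R * S)ᴴ = N * N := by
    rw [hAH, hN2, ← hSS]
    simp only [mul_assoc]
  have hdetW : W.det ≠ 0 := by
    have h1 : W.det * W.det = (R * S)ᴴ.det * (R * S).det := by rw [← det_mul, hWW, det_mul]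
    have h2 : (R * S).det ≠ 0 := by
      rw [det_mul]
      exact mul_ne_zero hdetR hdetS
    have h3 : (R * S)ᴴ.det ≠ 0 := by
      rw [det_conjTranspose]
      exact star_ne_zero.mpr h2
    intro h
    rw [h, mul_zero] at h1
    exact mul_ne_zero h3 h2 h1.symm
  have hWi : W⁻¹ * W = 1 := nonsing_inv_mul W (Ne.isUnit hdetW)
  have hWi' : W * W⁻¹ = 1 := mul_nonsing_inv W (Ne.isUnit hdetW)
  have hWinvPsd : (W⁻¹).PosSemidef := by
    have h1 := hWpsd.conjTranspose_mul_mul_same W⁻¹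
    rwa [hWpsd.1.inv.eq, show W⁻¹ * W * W⁻¹ = W⁻¹ from by rw [hWi, one_mul]] at h1
  have hZpsd : ((R * S) * W⁻¹ * (R * S)ᴴ).PosSemidef := hWinvPsd.mul_mul_conjTranspose_same (R * S)
  have hZ2 : ((R * S) * W⁻¹ * (R * S)ᴴ) ^ 2 = N ^ 2 := by
    rw [pow_two, pow_two, ← hAAt]
    calc ((R * S) * W⁻¹ * (R * S)ᴴ) * ((R * S) * W⁻¹ * (R * S)ᴴ)
        = (R * S) * (W⁻¹ * (((R * S)ᴴ * (R * S)) * (W⁻¹ * (R * S)ᴴ))) := by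
          simp only [mul_assoc]
      _ = (R * S) * (W⁻¹ * (W * (W * W⁻¹ * (R * S)ᴴ))) := by rw [← hWW]; simp only [mul_assoc]
      _ = (R * S) * (R * S)ᴴ := by rw [hWi', one_mul, ← mul_assoc W⁻¹ W, hWi, one_mul]
  have hZN : (R * S) * W⁻¹ * (R * S)ᴴ = N := hZpsd.eq_of_sq_eq_sq hN hZ2
  have htWN : W.trace = N.trace := by
    rw [← hZN, trace_mul_cycle (R * S) W⁻¹ (R * S)ᴴ, ← hWW, mul_assoc, hWi', mul_one]
  have htN : N.trace = 2 * (c : ℂ) / (1 + (c : ℂ) ^ 2) := by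
    rw [hNR, trace_mul_cycle R M R, hRR, trace_mul_comm ρ M]
    exact ht
  have hTF : traceNorm (R * S) = 2 * c / (1 + c ^ 2) := by
    have : W.trace = ((2 * c / (1 + c ^ 2) : ℝ) : ℂ) := by
      rw [htWN, htN]
      push_cast
      ring
    rw [traceNorm, ← hWdef, this, Complex.ofReal_re]
  rw [hTN, hTF]
  have harith : 1 - (2 * c / (1 + c ^ 2)) ^ 2 = ((1 - c ^ 2) / (1 + c ^ 2)) ^ 2 := by
    have h1 : (1 : ℝ) + c ^ 2 ≠ 0 := by positivity
    field_simp
    ring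
  rw [harith, Real.sqrt_sq (by
    apply div_nonneg
    · nlinarith
    · positivity)]
  have h1 : (1 : ℝ) + c ^ 2 ≠ 0 := by positivity
  field_simp
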